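/- If the set Adj⁺(T, S) of trees obtainable from T by adjoining each element of the finite set S of adjunct trees at least once is non-empty, then there exists T' ∈ Adj⁺(T, S) obtained by adjoining each element of S exactly once. -/

import Mathlib

/-- Trees whose internal nodes are labeled by nonterminals in `V`
and whose leaves are labeled by elements of `L`. -/
inductive PTree (V L : Type) : Type
  | leaf : L → PTree V L
  | node : V → List (PTree V L) → PTree V L

namespace PTree

variable {V A L : Type}

/-- Leaf alphabet for contexts/adjunct trees: a letter-or-ε leaf, or the hole. -/
abbrev Aug (A : Type) := Option A ⊕ Unit

/-- The root label of a tree: a nonterminal or a leaf label. -/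
def rootLabel : PTree V L → V ⊕ L
  | .leaf a => .inr a
  | .node X _ => .inl X

/-- Set of nonterminals occurring in a tree. -/
def ntSet : PTree V L → Set V
  | .leaf _ => ∅
  | .node X ts => insert X ((ts.attach.map (fun ⟨t, _⟩ => ntSet t)).foldr (· ∪ ·) ∅)

/-- A tree is simple if no nonterminal occurs twice on a root-to-leaf path. -/
def Simple : PTree V L → Prop
  | .leaf _ => True
  | .node X ts => ∀ t ∈ ts, X ∉ ntSet t ∧ Simple t

/-- Number of holes in a context / adjunct tree. -/
def holes : PTree V (Aug A) → ℕ
  | .leaf (.inr _) => 1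
  | .leaf (.inl _) => 0
  | .node _ ts => (ts.attach.map (fun ⟨t, _⟩ => holes t)).sum

/-- Substitute the tree `T` for every hole. -/
def subst (T : PTree V (Option A)) : PTree V (Aug A) → PTree V (Option A)
  | .leaf (.inl a) => .leaf a
  | .leaf (.inr _) => T
  | .node X ts => .node X (ts.attach.map (fun ⟨t, _⟩ => subst T t))

/-- Embed a `(V,A)`-tree into trees with holes (no holes created). -/
def toAug : PTree V (Option A) → PTree V (Aug A)
  | .leaf a => .leaf (.inl a)
  | .node X ts => .node X (ts.attach.map (fun ⟨t, _⟩ => toAug t))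

/-- Yield of a `(V,A)`-tree. -/
def yield : PTree V (Option A) → List A
  | .leaf none => []
  | .leaf (some a) => [a]
  | .node _ ts => (ts.attach.map (fun ⟨t, _⟩ => yield t)).flatten

/-- Yield of a context / adjunct tree, holes contributing `ε`. -/
def yieldA : PTree V (Aug A) → List A
  | .leaf (.inl none) => []
  | .leaf (.inl (some a)) => [a]
  | .leaf (.inr _) => []
  | .node _ ts => (ts.attach.map (fun ⟨t, _⟩ => yieldA t)).flatten

/-- Height of a tree. -/
def height : PTree V L → ℕ
  | .leaf _ => 0
  | .node _ ts => (ts.attach.map (fun ⟨t, _⟩ => height t)).foldr max 0 + 1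

/-- Size (number of nodes) of a tree. -/
def tsize : PTree V L → ℕ
  | .leaf _ => 1
  | .node _ ts => (ts.attach.map (fun ⟨t, _⟩ => tsize t)).sum + 1

end PTree

open PTree

/-- A context-free grammar over `A` with nonterminals `V`:
a finite set of rules `D ⊆ V × (V ∪ A ∪ {ε})⁺` and a start symbol. -/
structure CFG (V A : Type) where
  rules : Set (V × List (V ⊕ Option A))
  rules_fin : rules.Finite
  start : V

variable {V A : Type}

/-- A tree is a valid derivation w.r.t. the rules `D`. -/
inductive IsDeriv (D : Set (V × List (V ⊕ Option A))) : PTree V (Option A) → Prop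
  | leaf (a : Option A) : IsDeriv D (.leaf a)
  | node (X : V) (ts : List (PTree V (Option A))) :
      (X, ts.map rootLabel) ∈ D → (∀ t ∈ ts, IsDeriv D t) → IsDeriv D (.node X ts)

/-- The set `Trees(G)` of derivation trees of `G`. -/
def TreesSet (G : CFG V A) : Set (PTree V (Option A)) :=
  {T | T.rootLabel = .inl G.start ∧ IsDeriv G.rules T}

/-- The language of `G`: yields of derivation trees. -/
def lang (G : CFG V A) : Set (List A) := PTree.yield '' TreesSet G

/-- An adjunct tree is represented by its root nonterminal `X` together with a tree
over `V, A ∪ {X}` (the distinguished leaf `X` being the hole). -/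
abbrev AdjT (V A : Type) := V × PTree V (Aug A)

/-- Wellformedness of an adjunct tree: root node labeled `X`, exactly one `X`-leaf. -/
def WFAdjunct (p : AdjT V A) : Prop :=
  (∃ ts, p.2 = PTree.node p.1 ts) ∧ p.2.holes = 1

/-- A simple adjunct tree: no nonterminal repeats on paths from a child of the root. -/
def SimpleAdjunct (p : AdjT V A) : Prop :=
  ∃ ts, p.2 = PTree.node p.1 ts ∧ ∀ t ∈ ts, Simple t

/-- Root label of a subtree of an adjunct tree with root nonterminal `X`:
the hole leaf is labeled `X`. -/
def augRoot (X : V) : PTree V (Aug A) → V ⊕ Option A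
  | .leaf (.inl a) => .inr a
  | .leaf (.inr _) => .inl X
  | .node Y _ => .inl Y

/-- An adjunct tree is extracted from derivation trees of `D`: every internal
node respects the rules. -/
inductive IsDerivA (D : Set (V × List (V ⊕ Option A))) (X : V) : PTree V (Aug A) → Prop
  | leaf (a : Aug A) : IsDerivA D X (.leaf a)
  | node (Y : V) (ts : List (PTree V (Aug A))) :
      (Y, ts.map (augRoot X)) ∈ D → (∀ t ∈ ts, IsDerivA D X t) → IsDerivA D X (.node Y ts)

/-- `T ⊢_α T'` : `T'` is obtained from `T` by adjoining the adjunct tree `α`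
at some occurrence of its root nonterminal. -/
def Adjoins (α : AdjT V A) (T T' : PTree V (Option A)) : Prop :=
  WFAdjunct α ∧
  ∃ (C : PTree V (Aug A)) (ts : List (PTree V (Option A))),
    C.holes = 1 ∧
    subst (.node α.1 ts) C = T ∧
    subst (subst (.node α.1 ts) α.2) C = T'

/-- `AdjChain L T T'` : `T'` is obtained from `T` by successively adjoining
the adjunct trees listed in `L`. -/
def AdjChain : List (AdjT V A) → PTree V (Option A) → PTree V (Option A) → Prop
  | [], T, T' => T = T'
  | α :: L, T, T' => ∃ T₁, Adjoins α T T₁ ∧ AdjChain L T₁ T'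

/-- `Adj⁺(T,S)` : trees obtained from `T` using exactly the adjunct trees of `S`,
each at least once. -/
def AdjPlus (T : PTree V (Option A)) (S : Set (AdjT V A)) : Set (PTree V (Option A)) :=
  {T' | ∃ L : List (AdjT V A), AdjChain L T T' ∧ {α | α ∈ L} = S}

/-- `Adj(T,S)` : trees obtained from `T` using adjunct trees of `S`, arbitrarily often. -/
def AdjStar (T : PTree V (Option A)) (S : Set (AdjT V A)) : Set (PTree V (Option A)) :=
  {T' | ∃ L : List (AdjT V A), AdjChain L T T' ∧ {α | α ∈ L} ⊆ S}

namespace PTree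
variable [DecidableEq V]

mutual
/-- Find the leftmost `X`-rooted subtree: returns the surrounding context
(with a hole in its place) and the subtree. -/
def extract (X : V) : PTree V (Option A) → Option (PTree V (Aug A) × PTree V (Option A))
  | .leaf _ => none
  | .node Y ts =>
    if Y = X then some (.leaf (.inr ()), .node Y ts)
    else match extractL X ts with
      | none => none
      | some (Cs, sub) => some (.node Y Cs, sub)

/-- List version of `extract`. -/
def extractL (X : V) : List (PTree V (Option A)) → Option (List (PTree V (Aug A)) × PTree V (Option A))
  | [] => none
  | t :: ts =>
    match extract X t with
    | some (C, sub) => some (C :: ts.map toAug, sub)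
    | none =>
      match extractL X ts with
      | some (Cs, sub) => some (toAug t :: Cs, sub)
      | none => none
end

/-- Takahashi's decomposition of a tree into a simple tree and a set of
simple adjunct trees. -/
def decomp : PTree V (Option A) → PTree V (Option A) × Set (AdjT V A)
  | .leaf a => (.leaf a, ∅)
  | .node X ts =>
    let rs := ts.attach.map (fun ⟨t, _⟩ => decomp t)
    let S := (rs.map Prod.snd).foldr (· ∪ ·) ∅
    match extractL X (rs.map Prod.fst) with
    | none => (.node X (rs.map Prod.fst), S)
    | some (Cs, sub) => (sub, insert (X, PTree.node X Cs) S)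

end PTree

/-- The simple trees arising from decompositions of derivation trees. -/
def sTrees (G : CFG V A) [DecidableEq V] : Set (PTree V (Option A)) :=
  {T' | ∃ T ∈ TreesSet G, (decomp T).1 = T'}

/-- The simple adjunct trees arising from decompositions of derivation trees. -/
def sLoops (G : CFG V A) [DecidableEq V] : Set (AdjT V A) :=
  {α | ∃ T ∈ TreesSet G, α ∈ (decomp T).2}

/-- Parikh map. -/
def parikh [DecidableEq A] (w : List A) : A → ℕ := fun a => w.count a

/-- Linear subsets of `ℕ^A`. -/
def IsLinear (S : Set (A → ℕ)) : Prop :=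
  ∃ (v₀ : A → ℕ) (k : ℕ) (v : Fin k → A → ℕ),
    S = {u | ∃ x : Fin k → ℕ, u = v₀ + ∑ i, x i • v i}

/-- Semilinear subsets of `ℕ^A`: finite unions of linear sets. -/
def IsSemilinear (S : Set (A → ℕ)) : Prop :=
  ∃ (n : ℕ) (f : Fin n → Set (A → ℕ)), (∀ i, IsLinear (f i)) ∧ S = ⋃ i, f i

section AdjAux
open PTree

variable {V A : Type}

/-- Auxiliary: a nonterminal `X` occurs (as an internal node label) in a tree. -/
def hasN {V L : Type} (X : V) : PTree V L → Prop
  | .leaf _ => False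
  | .node Y ts => Y = X ∨ ∃ t ∈ ts.attach, hasN X t.1
decreasing_by
  simp_wf; have := List.sizeOf_lt_of_mem t.2; omega

theorem hasN_node {V L : Type} (X Y : V) (ts : List (PTree V L)) :
    hasN X (.node Y ts) ↔ Y = X ∨ ∃ t ∈ ts, hasN X t := by
  rw [show hasN X (.node Y ts) = (Y = X ∨ ∃ t ∈ ts.attach, hasN X t.1) from by rw [hasN]]
  simp

theorem hasN_leaf {V L : Type} (X : V) (a : L) : ¬ hasN X (.leaf a : PTree V L) := by
  rw [show hasN X (.leaf a : PTree V L) = False from by rw [hasN]]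
  simp

theorem attach_map_eq {α β : Type _} (l : List α) (f : α → β) :
    l.attach.map (fun ⟨t, _⟩ => f t) = l.map f := by
  simp

theorem holes_node (X : V) (ts : List (PTree V (Aug A))) :
    (PTree.node X ts).holes = (ts.map holes).sum := by
  rw [holes, attach_map_eq]

theorem holes_hole (u : Unit) : (PTree.leaf (.inr u) : PTree V (Aug A)).holes = 1 := by
  rw [holes]

theorem holes_lleaf (a : Option A) : (PTree.leaf (.inl a) : PTree V (Aug A)).holes = 0 := by
  rw [holes]

theorem subst_node (U : PTree V (Option A)) (X : V) (ts : List (PTree V (Aug A))) :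
    subst U (PTree.node X ts) = PTree.node X (ts.map (subst U)) := by
  rw [subst, attach_map_eq]

theorem subst_hole (U : PTree V (Option A)) (u : Unit) :
    subst U (PTree.leaf (.inr u) : PTree V (Aug A)) = U := by rw [subst]

theorem subst_lleaf (U : PTree V (Option A)) (a : Option A) :
    subst U (PTree.leaf (.inl a) : PTree V (Aug A)) = .leaf a := by rw [subst]

theorem toAug_node (X : V) (ts : List (PTree V (Option A))) :
    toAug (PTree.node X ts) = PTree.node X (ts.map toAug) := by
  rw [toAug, attach_map_eq]

theorem subst_toAug (U : PTree V (Option A)) :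
    ∀ t : PTree V (Option A), subst U (toAug t) = t
  | .leaf a => by rw [toAug, subst]
  | .node X ts => by
      rw [toAug_node, subst_node, List.map_map]
      congr 1
      conv_rhs => rw [← List.map_id ts]
      apply List.map_congr_left
      intro t ht
      exact subst_toAug U t
decreasing_by
  simp_wf; have := List.sizeOf_lt_of_mem ht; omega

theorem map_subst_toAug (U : PTree V (Option A)) (l : List (PTree V (Option A))) :
    List.map (subst U ∘ toAug) l = l := by
  conv_rhs => rw [← List.map_id l]
  apply List.map_congr_left
  intro t _
  exact subst_toAug U t

theorem holes_toAug : ∀ t : PTree V (Option A), (toAug t).holes = 0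
  | .leaf a => by rw [toAug, holes]
  | .node X ts => by
      rw [toAug_node, holes_node, List.map_map, List.sum_eq_zero_iff]
      intro x hx
      simp only [List.mem_map] at hx
      obtain ⟨t, ht, rfl⟩ := hx
      exact holes_toAug t
decreasing_by
  simp_wf; have := List.sizeOf_lt_of_mem ht; omega

theorem hasN_subst (X : V) (U : PTree V (Option A)) :
    ∀ C : PTree V (Aug A), hasN X (subst U C) ↔ hasN X C ∨ (C.holes ≠ 0 ∧ hasN X U)
  | .leaf (.inl a) => by
      rw [subst_lleaf, holes_lleaf]
      simp [hasN_leaf]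
  | .leaf (.inr u) => by
      rw [subst_hole, holes_hole]
      simp [hasN_leaf]
  | .node Y ts => by
      rw [subst_node, holes_node, hasN_node, hasN_node]
      have h1 : ∀ t ∈ ts, (hasN X (subst U t) ↔ hasN X t ∨ (t.holes ≠ 0 ∧ hasN X U)) :=
        fun t ht => hasN_subst X U t
      have h2 : (ts.map holes).sum ≠ 0 ↔ ∃ t ∈ ts, t.holes ≠ 0 := by
        rw [Ne, List.sum_eq_zero_iff]
        simp
      constructor
      · rintro (rfl | ⟨t, ht, hh⟩)
        · exact Or.inl (Or.inl rfl)
        · simp only [List.mem_map] at ht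
          obtain ⟨t', ht', rfl⟩ := ht
          rcases (h1 t' ht').1 hh with h | ⟨hne, hU⟩
          · exact Or.inl (Or.inr ⟨t', ht', h⟩)
          · exact Or.inr ⟨h2.2 ⟨t', ht', hne⟩, hU⟩
      · rintro ((rfl | ⟨t, ht, hh⟩) | ⟨hne, hU⟩)
        · exact Or.inl rfl
        · exact Or.inr ⟨subst U t, List.mem_map_of_mem ht, (h1 t ht).2 (Or.inl hh)⟩
        · obtain ⟨t, ht, htne⟩ := h2.1 hne
          exact Or.inr ⟨subst U t, List.mem_map_of_mem ht,
            (h1 t ht).2 (Or.inr ⟨htne, hU⟩)⟩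
decreasing_by
  simp_wf; have := List.sizeOf_lt_of_mem ht; omega

/-- If `X` occurs in `T`, we can split `T` into a one-hole context and an `X`-rooted subtree. -/
theorem exists_context (X : V) :
    ∀ T : PTree V (Option A), hasN X T →
      ∃ (C : PTree V (Aug A)) (ts : List (PTree V (Option A))),
        C.holes = 1 ∧ subst (PTree.node X ts) C = T
  | .leaf a, h => absurd h (hasN_leaf X a)
  | .node Y us, h => by
      rcases (hasN_node X Y us).1 h with rfl | ⟨t, ht, hh⟩
      · exact ⟨.leaf (.inr ()), us, holes_hole (), subst_hole _ ()⟩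
      · obtain ⟨C', ts', hC', hsub⟩ := exists_context X t hh
        obtain ⟨l₁, l₂, rfl⟩ := List.append_of_mem ht
        refine ⟨PTree.node Y (l₁.map toAug ++ C' :: l₂.map toAug), ts', ?_, ?_⟩
        · rw [holes_node]
          simp only [List.map_append, List.map_cons, List.map_map, List.sum_append,
            List.sum_cons]
          have z1 : (l₁.map (holes ∘ toAug)).sum = 0 := by
            rw [List.sum_eq_zero_iff]
            simp only [List.mem_map]
            rintro x ⟨u, _, rfl⟩
            exact holes_toAug u
          have z2 : (l₂.map (holes ∘ toAug)).sum = 0 := by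
            rw [List.sum_eq_zero_iff]
            simp only [List.mem_map]
            rintro x ⟨u, _, rfl⟩
            exact holes_toAug u
          rw [z1, z2, hC']
        · rw [subst_node]
          simp only [List.map_append, List.map_cons, List.map_map]
          rw [map_subst_toAug, map_subst_toAug, hsub]
decreasing_by
  simp_wf; have := List.sizeOf_lt_of_mem ht; omega

theorem hasN_of_adjoins {β : AdjT V A} {T T₂ : PTree V (Option A)}
    (h : Adjoins β T T₂) : hasN β.1 T := by
  obtain ⟨hWF, C, ts, hC, hT, -⟩ := h
  rw [← hT, hasN_subst]
  exact Or.inr ⟨by omega, (hasN_node _ _ _).2 (Or.inl rfl)⟩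

theorem adjoins_of_hasN {β : AdjT V A} {T : PTree V (Option A)}
    (hWF : WFAdjunct β) (h : hasN β.1 T) : ∃ T₂, Adjoins β T T₂ := by
  obtain ⟨C, ts, hC, hsub⟩ := exists_context β.1 T h
  exact ⟨_, hWF, C, ts, hC, hsub, rfl⟩

theorem adjoins_hasN {β : AdjT V A} {T T₂ : PTree V (Option A)}
    (h : Adjoins β T T₂) (X : V) : hasN X T₂ ↔ hasN X T ∨ hasN X β.2 := by
  obtain ⟨⟨-, hh⟩, C, ts, hC, hT, hT₂⟩ := h
  rw [← hT, ← hT₂, hasN_subst, hasN_subst, hasN_subst, hC, hh]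
  constructor
  · rintro (h | ⟨-, (h | ⟨-, h⟩)⟩)
    · exact Or.inl (Or.inl h)
    · exact Or.inr h
    · exact Or.inl (Or.inr ⟨one_ne_zero, h⟩)
  · rintro ((h | ⟨-, h⟩) | h)
    · exact Or.inl h
    · exact Or.inr ⟨one_ne_zero, Or.inr ⟨one_ne_zero, h⟩⟩
    · exact Or.inr ⟨one_ne_zero, Or.inl h⟩

theorem adjChain_append {P Q : List (AdjT V A)} {T U : PTree V (Option A)} :
    AdjChain (P ++ Q) T U ↔ ∃ W, AdjChain P T W ∧ AdjChain Q W U := by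
  induction P generalizing T with
  | nil => simp [AdjChain]
  | cons β P ih =>
      simp only [List.cons_append, AdjChain]
      constructor
      · rintro ⟨T₁, hβ, hc⟩
        obtain ⟨W, h1, h2⟩ := ih.1 hc
        exact ⟨W, ⟨T₁, hβ, h1⟩, h2⟩
      · rintro ⟨W, ⟨T₁, hβ, h1⟩, h2⟩
        exact ⟨T₁, hβ, ih.2 ⟨W, h1, h2⟩⟩

theorem chain_mono {L : List (AdjT V A)} {T U : PTree V (Option A)}
    (h : AdjChain L T U) (X : V) (hX : hasN X T) : hasN X U := by
  induction L generalizing T with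
  | nil => exact h ▸ hX
  | cons β L ih =>
      obtain ⟨T₁, hβ, hc⟩ := h
      exact ih hc ((adjoins_hasN hβ X).2 (Or.inl hX))

theorem replay {M : List (AdjT V A)} :
    ∀ {T T₁ U : PTree V (Option A)}, AdjChain M T U → (∀ X, hasN X T → hasN X T₁) →
      ∃ U₁, AdjChain M T₁ U₁ ∧ ∀ X, hasN X U → hasN X U₁ := by
  induction M with
  | nil => rintro T T₁ U rfl hmono; exact ⟨T₁, rfl, hmono⟩
  | cons β M ih =>
      rintro T T₁ U ⟨T₂, hβ, hc⟩ hmono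
      have hWF : WFAdjunct β := hβ.1
      have hroot : hasN β.1 T₁ := hmono _ (hasN_of_adjoins hβ)
      obtain ⟨T₂', hβ'⟩ := adjoins_of_hasN hWF hroot
      have hmono₂ : ∀ X, hasN X T₂ → hasN X T₂' := by
        intro X hX
        rcases (adjoins_hasN hβ X).1 hX with h | h
        · exact (adjoins_hasN hβ' X).2 (Or.inl (hmono X h))
        · exact (adjoins_hasN hβ' X).2 (Or.inr h)
      obtain ⟨U₁, hc₁, hmonoU⟩ := ih hc hmono₂
      exact ⟨U₁, ⟨T₂', hβ', hc₁⟩, hmonoU⟩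

theorem nodup_chain :
    ∀ (L : List (AdjT V A)) (T U : PTree V (Option A)), AdjChain L T U →
      ∃ (M : List (AdjT V A)) (U' : PTree V (Option A)),
        AdjChain M T U' ∧ M.Nodup ∧ ∀ a, a ∈ M ↔ a ∈ L := by
  intro L
  induction L with
  | nil => rintro T U rfl; exact ⟨[], T, rfl, List.nodup_nil, by simp⟩
  | cons α L ih =>
      rintro T U ⟨T₁, hα, hc⟩
      obtain ⟨M, U₁, hcM, hnodup, hmem⟩ := ih T₁ U hc
      by_cases hαM : α ∈ M
      · obtain ⟨P, Q, rfl⟩ := List.append_of_mem hαM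
        obtain ⟨W, hP, V', hαV, hQ⟩ := adjChain_append.1 hcM
        have hmono : ∀ X, hasN X V' → hasN X W := by
          intro X hX
          rcases (adjoins_hasN hαV X).1 hX with h | h
          · exact h
          · exact chain_mono hP X ((adjoins_hasN hα X).2 (Or.inr h))
        obtain ⟨U₂, hQ2, -⟩ := replay hQ hmono
        refine ⟨α :: (P ++ Q), U₂, ⟨T₁, hα, adjChain_append.2 ⟨W, hP, hQ2⟩⟩, ?_, ?_⟩
        · have hsub : (P ++ Q).Sublist (P ++ α :: Q) :=
            (List.sublist_cons_self α Q).append_left P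
          refine List.Nodup.cons ?_ (hsub.nodup hnodup)
          intro hmem2
          have h3 := List.nodup_append.1 hnodup
          rcases List.mem_append.1 hmem2 with h | h
          · exact h3.2.2 α h α List.mem_cons_self rfl
          · exact (List.nodup_cons.1 h3.2.1).1 h
        · intro a
          have := hmem a
          simp only [List.mem_cons, List.mem_append] at *
          tauto
      · exact ⟨α :: M, U₁, ⟨T₁, hα, hcM⟩, List.Nodup.cons hαM hnodup,
          fun a => by simp only [List.mem_cons]; rw [hmem a]⟩

end AdjAux

/-- If `Adj⁺(T,S)` is nonempty then some `T' ∈ Adj⁺(T,S)` is obtained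
by adjoining each element of `S` exactly once. -/
theorem adjplus_once {V A : Type} (T : PTree V (Option A)) (S : Set (AdjT V A))
    (hS : S.Finite) (h : (AdjPlus T S).Nonempty) :
    ∃ T' ∈ AdjPlus T S, ∃ L : List (AdjT V A),
      AdjChain L T T' ∧ {α | α ∈ L} = S ∧ L.Nodup := by
  obtain ⟨T₀, L₀, hc, hset⟩ := h
  obtain ⟨M, U', hcM, hnodup, hmem⟩ := nodup_chain L₀ T T₀ hc
  have hsetM : {α | α ∈ M} = S := by
    rw [← hset]; ext a; exact hmem a
  exact ⟨U', ⟨M, hcM, hsetM⟩, M, hcM, hsetM, hnodup⟩
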